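/- Let G be a finite nilpotent group of odd order and let O be a conjugacy class of G. Then either O is abelian as a subrack (that is, x*y*x⁻¹ = y for all x, y ∈ O, equivalently all elements of O commute pairwise), or O is of type C. -/

import Mathlib

/-- A subset `X` of a group `G` is a subrack if it is closed under conjugation
and inverse conjugation. -/
def IsSubrack {G : Type*} [Group G] (X : Set G) : Prop :=
  ∀ x ∈ X, ∀ y ∈ X, x * y * x⁻¹ ∈ X ∧ x⁻¹ * y * x ∈ X

/-- A finite subrack `X` of a group `G` is of type C. -/
def IsTypeC {G : Type*} [Group G] (X : Set G) : Prop :=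
  ∃ R S : Set G, R.Nonempty ∧ S.Nonempty ∧ Disjoint R S ∧
    R ∪ S ⊆ X ∧ IsSubrack (R ∪ S) ∧
    ∃ r ∈ R, ∃ s ∈ S,
      r * s * r⁻¹ ≠ s ∧
      R = {y | ∃ h ∈ Subgroup.closure (R ∪ S), h * r * h⁻¹ = y} ∧
      S = {y | ∃ h ∈ Subgroup.closure (R ∪ S), h * s * h⁻¹ = y} ∧
      (2 < min (Nat.card R) (Nat.card S) ∨ 4 < max (Nat.card R) (Nat.card S))

open scoped commutatorElement

/-- A nilpotent group generated by an element `a` together with a conjugate of `a`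
is abelian. -/
lemma aux_comm {H : Type*} [Group H] [Group.IsNilpotent H] (a g : H)
    (hgen : Subgroup.closure ({a, g * a * g⁻¹} : Set H) = ⊤) :
    ∀ x y : H, x * y = y * x := by
  -- `H = ⟨a⟩ ⊔ [H,H]`
  have hsup : Subgroup.zpowers a ⊔ commutator H = ⊤ := by
    rw [← top_le_iff, ← hgen]
    apply Subgroup.closure_le _ |>.mpr
    intro w hw
    simp only [Set.mem_insert_iff, Set.mem_singleton_iff] at hw
    rcases hw with rfl | rfl
    · exact Subgroup.mem_sup_left (Subgroup.mem_zpowers _)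
    · have h1 : g * a * g⁻¹ = a * ⁅a⁻¹, g⁆ := by
        rw [commutatorElement_def]; group
      rw [h1]
      exact Subgroup.mul_mem _
        (Subgroup.mem_sup_left (Subgroup.mem_zpowers a))
        (Subgroup.mem_sup_right
          (Subgroup.commutator_mem_commutator (Subgroup.mem_top _) (Subgroup.mem_top _)))
  -- inductive step: `[H,H] ≤ γ_n → [H,H] ≤ γ_{n+1}`
  have key : ∀ n : ℕ, commutator H ≤ Subgroup.lowerCentralSeries (⊤ : Subgroup H) n →
      commutator H ≤ Subgroup.lowerCentralSeries (⊤ : Subgroup H) (n + 1) := by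
    intro n ih
    set N := Subgroup.lowerCentralSeries (⊤ : Subgroup H) (n + 1) with hN
    haveI : N.Normal := Subgroup.lowerCentralSeries_normal ⊤ (n + 1)
    set π : H →* H ⧸ N := QuotientGroup.mk' N with hπ
    -- images of `γ_n` are central mod `N`
    have hcent : ∀ u ∈ Subgroup.lowerCentralSeries (⊤ : Subgroup H) n, ∀ q : H, Commute (π q) (π u) := by
      intro u hu q
      have hmem : ⁅u⁻¹, q⁻¹⁆ ∈ N := by
        rw [hN, lowerCentralSeries_succ]
        exact Subgroup.subset_closure ⟨u⁻¹,
          (Subgroup.lowerCentralSeries (⊤ : Subgroup H) n).inv_mem hu, q⁻¹, Subgroup.mem_top q⁻¹, by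
            rw [commutatorElement_def]⟩
      have heq : (q * u)⁻¹ * (u * q) = ⁅u⁻¹, q⁻¹⁆ := by
        rw [commutatorElement_def]; group
      have : (π (q * u))⁻¹ * π (u * q) = 1 := by
        rw [← map_inv, ← map_mul, heq]
        exact (QuotientGroup.eq_one_iff _).mpr hmem
      have h2 : π (q * u) = π (u * q) := by
        rw [← inv_mul_eq_one]; exact this
      unfold Commute SemiconjBy
      rw [← map_mul, ← map_mul, h2]
    -- now deduce `[H,H] ≤ N`
    rw [commutator_def]
    apply Subgroup.commutator_le.mpr
    intro p _ q _
    have hp : p ∈ Subgroup.zpowers a ⊔ commutator H := by rw [hsup]; trivial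
    have hq : q ∈ Subgroup.zpowers a ⊔ commutator H := by rw [hsup]; trivial
    rw [← SetLike.mem_coe, Subgroup.mul_normal] at hp hq
    obtain ⟨c₁, hc₁, u, hu, rfl⟩ := hp
    obtain ⟨c₂, hc₂, v, hv, rfl⟩ := hq
    obtain ⟨k, rfl⟩ := Subgroup.mem_zpowers_iff.mp hc₁
    obtain ⟨l, rfl⟩ := Subgroup.mem_zpowers_iff.mp hc₂
    have hu' : u ∈ Subgroup.lowerCentralSeries (⊤ : Subgroup H) n := ih hu
    have hv' : v ∈ Subgroup.lowerCentralSeries (⊤ : Subgroup H) n := ih hv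
    have hcom : Commute (π (a ^ k * u)) (π (a ^ l * v)) := by
      rw [map_mul, map_mul]
      have hkl : Commute (π (a ^ k)) (π (a ^ l)) :=
        ((Commute.refl a).zpow_zpow k l).map π
      exact Commute.mul_left
        (Commute.mul_right hkl (hcent v hv' (a ^ k)))
        (Commute.mul_right ((hcent u hu' (a ^ l)).symm) ((hcent u hu' v).symm))
    have : π ⁅a ^ k * u, a ^ l * v⁆ = 1 := by
      rw [map_commutatorElement]
      exact commutatorElement_eq_one_iff_commute.mpr hcom
    exact (QuotientGroup.eq_one_iff _).mp this
  -- conclude: `[H,H] = ⊥`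
  have hall : ∀ n : ℕ, commutator H ≤ Subgroup.lowerCentralSeries (⊤ : Subgroup H) n := by
    intro n
    induction n with
    | zero => exact le_top
    | succ m ihm => exact key m ihm
  obtain ⟨n, hn⟩ := nilpotent_iff_lowerCentralSeries.mp ‹Group.IsNilpotent H›
  have hbot : commutator H ≤ ⊥ := hn ▸ hall n
  intro x y
  have hxy : ⁅x, y⁆ ∈ commutator H := by
    rw [commutator_def]
    exact Subgroup.commutator_mem_commutator (Subgroup.mem_top _) (Subgroup.mem_top _)
  have h1 : ⁅x, y⁆ = 1 := Subgroup.mem_bot.mp (hbot hxy)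
  exact (commutatorElement_eq_one_iff_commute.mp h1).eq

/-- The size of a conjugation orbit under a subgroup divides the order of the group. -/
lemma card_conj_orbit_dvd {G : Type*} [Group G] [Fintype G] (H : Subgroup G) (y : G) :
    Nat.card {w : G | ∃ h ∈ H, h * y * h⁻¹ = w} ∣ Fintype.card G := by
  classical
  set H' : Subgroup (ConjAct G) := H.map (ConjAct.toConjAct.toMonoidHom : G →* ConjAct G)
    with hH'
  have horb : {w : G | ∃ h ∈ H, h * y * h⁻¹ = w} = MulAction.orbit H' y := by
    ext w
    constructor
    · rintro ⟨h, hh, rfl⟩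
      refine ⟨⟨ConjAct.toConjAct h, Subgroup.mem_map_of_mem _ hh⟩, ?_⟩
      show (ConjAct.toConjAct h) • y = h * y * h⁻¹
      rw [ConjAct.toConjAct_smul]
    · rintro ⟨⟨u, hu⟩, rfl⟩
      rw [hH', Subgroup.mem_map] at hu
      obtain ⟨h, hh, rfl⟩ := hu
      refine ⟨h, hh, ?_⟩
      show h * y * h⁻¹ = (ConjAct.toConjAct h) • y
      rw [ConjAct.toConjAct_smul]
  rw [horb]
  have e1 : Nat.card (MulAction.orbit H' y) =
      Nat.card (H' ⧸ MulAction.stabilizer H' y) :=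
    Nat.card_congr (MulAction.orbitEquivQuotientStabilizer H' y)
  have e2 : Nat.card (H' ⧸ MulAction.stabilizer H' y) ∣ Nat.card H' :=
    Subgroup.card_quotient_dvd_card _
  have e3 : Nat.card H' = Nat.card H :=
    (Nat.card_congr (Subgroup.equivMapOfInjective H _
      ConjAct.toConjAct.injective).toEquiv).symm
  have e4 : Nat.card H ∣ Nat.card G := Subgroup.card_subgroup_dvd_card H
  rw [e1, ← Nat.card_eq_fintype_card]
  exact dvd_trans e2 (e3 ▸ e4)

/-- Every conjugacy class of a finite nilpotent group of odd order is either abelian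
as a subrack or of type C. -/
theorem conjclass_odd_nilpotent_abelian_or_typeC
    {G : Type*} [Group G] [Fintype G] (hnil : Group.IsNilpotent G)
    (hodd : Odd (Fintype.card G)) (x : G) :
    (∀ y ∈ {y : G | ∃ g : G, g * x * g⁻¹ = y}, ∀ z ∈ {y : G | ∃ g : G, g * x * g⁻¹ = y},
      y * z * y⁻¹ = z) ∨
    IsTypeC {y : G | ∃ g : G, g * x * g⁻¹ = y} := by
  classical
  haveI := hnil
  by_cases habel : ∀ y ∈ {y : G | ∃ g : G, g * x * g⁻¹ = y},
      ∀ z ∈ {y : G | ∃ g : G, g * x * g⁻¹ = y}, y * z * y⁻¹ = z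
  · exact Or.inl habel
  right
  push_neg at habel
  obtain ⟨y, hy, z, hz, hyz⟩ := habel
  set H : Subgroup G := Subgroup.closure {y, z} with hH
  have hyH : y ∈ H := Subgroup.subset_closure (by simp)
  have hzH : z ∈ H := Subgroup.subset_closure (by simp)
  -- y is not conjugate to z inside H
  have hnc : ∀ h ∈ H, h * y * h⁻¹ ≠ z := by
    intro h hh heq
    have hpre : ((Subgroup.closure ({y, z} : Set G)).subtype ⁻¹' {y, z} : Set H) =
        {⟨y, hyH⟩, ⟨z, hzH⟩} := by
      ext w
      simp [Subtype.ext_iff]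
    have hgen : Subgroup.closure ({⟨y, hyH⟩, ⟨z, hzH⟩} : Set H) = ⊤ := by
      rw [← hpre]
      exact Subgroup.closure_preimage_eq_top _
    have hconj : (⟨h, hh⟩ : H) * ⟨y, hyH⟩ * (⟨h, hh⟩ : H)⁻¹ = ⟨z, hzH⟩ :=
      Subtype.ext (by simpa using heq)
    rw [← hconj] at hgen
    have hcomm := aux_comm (⟨y, hyH⟩ : H) ⟨h, hh⟩ hgen ⟨y, hyH⟩ ⟨z, hzH⟩
    have hyzc : y * z = z * y := by
      have := congrArg (Subtype.val) hcomm
      simpa using this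
    apply hyz
    rw [hyzc]; group
  -- the two orbits
  set R : Set G := {w | ∃ h ∈ H, h * y * h⁻¹ = w} with hRdef
  set S : Set G := {w | ∃ h ∈ H, h * z * h⁻¹ = w} with hSdef
  have hyR : y ∈ R := ⟨1, Subgroup.one_mem _, by group⟩
  have hzS : z ∈ S := ⟨1, Subgroup.one_mem _, by group⟩
  have hRH : R ⊆ (H : Set G) := by
    rintro w ⟨h, hh, rfl⟩
    exact Subgroup.mul_mem _ (Subgroup.mul_mem _ hh hyH) (Subgroup.inv_mem _ hh)
  have hSH : S ⊆ (H : Set G) := by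
    rintro w ⟨h, hh, rfl⟩
    exact Subgroup.mul_mem _ (Subgroup.mul_mem _ hh hzH) (Subgroup.inv_mem _ hh)
  -- closure of the union is H
  have hclos : Subgroup.closure (R ∪ S) = H := by
    apply le_antisymm
    · exact (Subgroup.closure_le _).mpr (Set.union_subset hRH hSH)
    · rw [hH]
      apply Subgroup.closure_mono
      intro w hw
      simp only [Set.mem_insert_iff, Set.mem_singleton_iff] at hw
      rcases hw with rfl | rfl
      · exact Or.inl hyR
      · exact Or.inr hzS
  -- disjointness
  have hdisj : Disjoint R S := by
    rw [Set.disjoint_left]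
    rintro w ⟨h₁, hh₁, rfl⟩ ⟨h₂, hh₂, he⟩
    apply hnc (h₂⁻¹ * h₁) (Subgroup.mul_mem _ (Subgroup.inv_mem _ hh₂) hh₁)
    calc (h₂⁻¹ * h₁) * y * (h₂⁻¹ * h₁)⁻¹
        = h₂⁻¹ * (h₁ * y * h₁⁻¹) * h₂ := by group
      _ = h₂⁻¹ * (h₂ * z * h₂⁻¹) * h₂ := by rw [← he]
      _ = z := by group
  -- contained in the conjugacy class
  have hsub : R ∪ S ⊆ {w : G | ∃ g : G, g * x * g⁻¹ = w} := by
    rintro w (⟨h, hh, rfl⟩ | ⟨h, hh, rfl⟩)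
    · obtain ⟨g, rfl⟩ := hy
      exact ⟨h * g, by group⟩
    · obtain ⟨g, rfl⟩ := hz
      exact ⟨h * g, by group⟩
  -- subrack
  have hsubrack : IsSubrack (R ∪ S) := by
    intro u hu w hw
    have huH : u ∈ H := by
      rcases hu with hu | hu
      · exact hRH hu
      · exact hSH hu
    constructor
    · rcases hw with ⟨h, hh, rfl⟩ | ⟨h, hh, rfl⟩
      · exact Or.inl ⟨u * h, Subgroup.mul_mem _ huH hh, by group⟩
      · exact Or.inr ⟨u * h, Subgroup.mul_mem _ huH hh, by group⟩
    · rcases hw with ⟨h, hh, rfl⟩ | ⟨h, hh, rfl⟩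
      · exact Or.inl ⟨u⁻¹ * h, Subgroup.mul_mem _ (Subgroup.inv_mem _ huH) hh, by group⟩
      · exact Or.inr ⟨u⁻¹ * h, Subgroup.mul_mem _ (Subgroup.inv_mem _ huH) hh, by group⟩
  -- cardinalities
  have hRcard : Nat.card R ∣ Fintype.card G := card_conj_orbit_dvd H y
  have hScard : Nat.card S ∣ Fintype.card G := card_conj_orbit_dvd H z
  have hRodd : Odd (Nat.card R) := Odd.of_dvd_nat hodd hRcard
  have hSodd : Odd (Nat.card S) := Odd.of_dvd_nat hodd hScard
  have hzyz : z * y * z⁻¹ ∈ R := ⟨z, hzH, rfl⟩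
  have hzyz_ne : z * y * z⁻¹ ≠ y := by
    intro he
    apply hyz
    have : z * y = y * z := by
      have := congrArg (· * z) he
      simpa [mul_assoc] using this
    rw [← this]; group
  have hyzy : y * z * y⁻¹ ∈ S := ⟨y, hyH, rfl⟩
  have hRtwo : 1 < Nat.card R := by
    haveI : Nontrivial R := ⟨⟨⟨y, hyR⟩, ⟨z * y * z⁻¹, hzyz⟩, by
      intro he
      exact hzyz_ne (by simpa [Subtype.ext_iff] using he.symm)⟩⟩
    exact Finite.one_lt_card_iff_nontrivial.mpr this
  have hStwo : 1 < Nat.card S := by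
    haveI : Nontrivial S := ⟨⟨⟨z, hzS⟩, ⟨y * z * y⁻¹, hyzy⟩, by
      intro he
      exact hyz (by simpa [Subtype.ext_iff] using he.symm)⟩⟩
    exact Finite.one_lt_card_iff_nontrivial.mpr this
  have hR3 : 2 < Nat.card R := by
    obtain ⟨k, hk⟩ := hRodd; omega
  have hS3 : 2 < Nat.card S := by
    obtain ⟨k, hk⟩ := hSodd; omega
  refine ⟨R, S, ⟨y, hyR⟩, ⟨z, hzS⟩, hdisj, hsub, hsubrack, y, hyR, z, hzS, hyz,
    ?_, ?_, Or.inl (lt_min hR3 hS3)⟩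
  · rw [hclos]
  · rw [hclos]
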